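/- Let $L(x) = A_0 + \sum_{j=1}^g A_j x_j$ with $A_j \in \mathbb{C}^{d \times d}$, and suppose there is $\eta > 0$ such that $L(X)^* L(X) \succeq \eta^2 I$ for all tuples $X$ of Hermitian matrices (of all sizes). Set $\varepsilon = \frac{\eta}{2}\left(\sum_{j=1}^g \|A_j\|\right)^{-1}$ (assuming some $A_j \neq 0$). Then for every tuple $X$ of $n \times n$ matrices with $\|\frac{1}{2i}(X_j - X_j^*)\| < \varepsilon$ for all $j$, the matrix $L(X) = A_0 \otimes I + \sum_j A_j \otimes X_j$ is invertible and $\|L(X)^{-1}\| \leq 2/\eta$. -/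

import Mathlib

open Matrix
open scoped ComplexOrder Kronecker Matrix.Norms.L2Operator

namespace Stmt14Aux

variable {m p : Type*} [Fintype m] [Fintype p] [DecidableEq m] [DecidableEq p]

lemma sq_le_imp {a b : ℝ} (ha : 0 ≤ a) (hb : 0 ≤ b) (h : a ^ 2 ≤ b ^ 2) : a ≤ b := by
  nlinarith [sq_nonneg (a - b), sq_nonneg (a + b)]

lemma norm_symm_sq (v : m → ℂ) :
    ‖(WithLp.equiv 2 (m → ℂ)).symm v‖ ^ 2 = ∑ i, ‖v i‖ ^ 2 := by
  rw [EuclideanSpace.norm_eq, Real.sq_sqrt (by positivity)]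
  simp

lemma opNorm_le (M : Matrix m p ℂ) {b : ℝ} (hb : 0 ≤ b)
    (h : ∀ x : p → ℂ, ‖(WithLp.equiv 2 (m → ℂ)).symm (M *ᵥ x)‖ ≤
      b * ‖(WithLp.equiv 2 (p → ℂ)).symm x‖) :
    ‖M‖ ≤ b := by
  rw [Matrix.l2_opNorm_def]
  refine ContinuousLinearMap.opNorm_le_bound _ hb fun x => ?_
  exact h ((WithLp.equiv 2 (p → ℂ)) x)

lemma mulVec_le (A : Matrix m p ℂ) (v : p → ℂ) :
    ‖(WithLp.equiv 2 (m → ℂ)).symm (A *ᵥ v)‖ ≤ ‖A‖ * ‖(WithLp.equiv 2 (p → ℂ)).symm v‖ := by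
  simpa using A.l2_opNorm_mulVec ((WithLp.equiv 2 (p → ℂ)).symm v)

lemma mulVec_sq_le (A : Matrix m p ℂ) (v : p → ℂ) :
    ∑ i, ‖(A *ᵥ v) i‖ ^ 2 ≤ ‖A‖ ^ 2 * ∑ j, ‖v j‖ ^ 2 := by
  have h2 := pow_le_pow_left₀ (norm_nonneg _) (mulVec_le A v) 2
  rwa [mul_pow, norm_symm_sq, norm_symm_sq] at h2

lemma isUnit_of_coercive (M : Matrix m m ℂ) {c : ℝ} (hc : 0 < c)
    (h : ∀ x : m → ℂ, c * ‖(WithLp.equiv 2 (m → ℂ)).symm x‖ ≤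
      ‖(WithLp.equiv 2 (m → ℂ)).symm (M *ᵥ x)‖) :
    IsUnit M ∧ ‖M⁻¹‖ ≤ c⁻¹ := by
  have hker : ∀ x : m → ℂ, M *ᵥ x = 0 → x = 0 := by
    intro x hx
    have h1 := h x
    rw [hx, show (WithLp.equiv 2 (m → ℂ)).symm (0 : m → ℂ) = 0 from rfl, norm_zero] at h1
    have h2 : ‖(WithLp.equiv 2 (m → ℂ)).symm x‖ = 0 := by
      nlinarith [norm_nonneg ((WithLp.equiv 2 (m → ℂ)).symm x)]
    have := norm_eq_zero.mp h2
    simpa using congrArg (WithLp.equiv 2 (m → ℂ)) this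
  have hinj : Function.Injective M.mulVec := by
    intro x y hxy
    have : M *ᵥ (x - y) = 0 := by rw [Matrix.mulVec_sub, hxy, sub_self]
    exact sub_eq_zero.mp (hker _ this)
  have hunit : IsUnit M := Matrix.mulVec_injective_iff_isUnit.mp hinj
  have hMinv : M * M⁻¹ = 1 := M.mul_nonsing_inv (Matrix.isUnit_iff_isUnit_det M |>.mp hunit)
  refine ⟨hunit, opNorm_le _ (inv_nonneg.mpr hc.le) fun y => ?_⟩
  have h2 := h (M⁻¹ *ᵥ y)
  rw [Matrix.mulVec_mulVec, hMinv, Matrix.one_mulVec] at h2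
  have h3 := mul_le_mul_of_nonneg_left h2 (inv_nonneg.mpr hc.le)
  rwa [← mul_assoc, inv_mul_cancel₀ hc.ne', one_mul] at h3

lemma coercive_of_posSemidef (M : Matrix m m ℂ) {η : ℝ} (hη : 0 ≤ η)
    (h : (Mᴴ * M - ((η ^ 2 : ℝ) : ℂ) • 1).PosSemidef) (x : m → ℂ) :
    η * ‖(WithLp.equiv 2 (m → ℂ)).symm x‖ ≤ ‖(WithLp.equiv 2 (m → ℂ)).symm (M *ᵥ x)‖ := by
  have key : ∀ v : m → ℂ, star v ⬝ᵥ v = ((‖(WithLp.equiv 2 (m → ℂ)).symm v‖ ^ 2 : ℝ) : ℂ) := by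
    intro v
    rw [norm_symm_sq]
    push_cast
    simp only [dotProduct, Pi.star_apply, Complex.star_def]
    congr 1
    ext i
    rw [← Complex.normSq_eq_conj_mul_self, Complex.normSq_eq_norm_sq]
    push_cast
    ring
  have h2 := h.dotProduct_mulVec_nonneg x
  rw [Matrix.sub_mulVec, dotProduct_sub, ← Matrix.mulVec_mulVec,
    Matrix.smul_mulVec, Matrix.one_mulVec, dotProduct_smul,
    sub_nonneg] at h2
  have h3 : star x ⬝ᵥ Mᴴ *ᵥ (M *ᵥ x) = star (M *ᵥ x) ⬝ᵥ (M *ᵥ x) := by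
    rw [Matrix.star_mulVec, Matrix.dotProduct_mulVec]
  rw [h3, key, key, smul_eq_mul, ← Complex.ofReal_mul, Complex.real_le_real] at h2
  refine sq_le_imp (by positivity) (norm_nonneg _) ?_
  rw [mul_pow]
  exact h2

lemma kron_one_le (A : Matrix m m ℂ) :
    ‖A ⊗ₖ (1 : Matrix p p ℂ)‖ ≤ ‖A‖ := by
  refine opNorm_le _ (norm_nonneg A) fun x => ?_
  refine sq_le_imp (norm_nonneg _) (by positivity) ?_
  rw [norm_symm_sq, mul_pow, norm_symm_sq]
  have hentry : ∀ (i : m) (k : p),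
      ((A ⊗ₖ (1 : Matrix p p ℂ)) *ᵥ x) (i, k) = (A *ᵥ fun j => x (j, k)) i := by
    intro i k
    simp [Matrix.mulVec, dotProduct, Fintype.sum_prod_type, Matrix.one_apply,
      mul_ite, ite_mul, mul_zero, zero_mul, mul_one]
  calc ∑ q : m × p, ‖((A ⊗ₖ (1 : Matrix p p ℂ)) *ᵥ x) q‖ ^ 2
      = ∑ k : p, ∑ i : m, ‖(A *ᵥ fun j => x (j, k)) i‖ ^ 2 := by
        rw [Fintype.sum_prod_type, Finset.sum_comm]
        simp_rw [hentry]
    _ ≤ ∑ k : p, ‖A‖ ^ 2 * ∑ j : m, ‖x (j, k)‖ ^ 2 :=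
        Finset.sum_le_sum fun k _ => mulVec_sq_le A _
    _ = ‖A‖ ^ 2 * ∑ q : m × p, ‖x q‖ ^ 2 := by
        rw [← Finset.mul_sum, Fintype.sum_prod_type, Finset.sum_comm]

lemma one_kron_le (B : Matrix p p ℂ) :
    ‖(1 : Matrix m m ℂ) ⊗ₖ B‖ ≤ ‖B‖ := by
  refine opNorm_le _ (norm_nonneg B) fun x => ?_
  refine sq_le_imp (norm_nonneg _) (by positivity) ?_
  rw [norm_symm_sq, mul_pow, norm_symm_sq]
  have hentry : ∀ (i : m) (k : p),
      (((1 : Matrix m m ℂ) ⊗ₖ B) *ᵥ x) (i, k) = (B *ᵥ fun l => x (i, l)) k := by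
    intro i k
    simp [Matrix.mulVec, dotProduct, Fintype.sum_prod_type, Matrix.one_apply,
      mul_ite, ite_mul, mul_zero, zero_mul, one_mul]
  calc ∑ q : m × p, ‖(((1 : Matrix m m ℂ) ⊗ₖ B) *ᵥ x) q‖ ^ 2
      = ∑ i : m, ∑ k : p, ‖(B *ᵥ fun l => x (i, l)) k‖ ^ 2 := by
        rw [Fintype.sum_prod_type]
        simp_rw [hentry]
    _ ≤ ∑ i : m, ‖B‖ ^ 2 * ∑ l : p, ‖x (i, l)‖ ^ 2 :=
        Finset.sum_le_sum fun i _ => mulVec_sq_le B _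
    _ = ‖B‖ ^ 2 * ∑ q : m × p, ‖x q‖ ^ 2 := by
        rw [← Finset.mul_sum, Fintype.sum_prod_type]

lemma kron_le (A : Matrix m m ℂ) (B : Matrix p p ℂ) :
    ‖A ⊗ₖ B‖ ≤ ‖A‖ * ‖B‖ := by
  have hfac : A ⊗ₖ B = (A ⊗ₖ (1 : Matrix p p ℂ)) * ((1 : Matrix m m ℂ) ⊗ₖ B) := by
    rw [← Matrix.mul_kronecker_mul, Matrix.mul_one, Matrix.one_mul]
  calc ‖A ⊗ₖ B‖ ≤ ‖A ⊗ₖ (1 : Matrix p p ℂ)‖ * ‖(1 : Matrix m m ℂ) ⊗ₖ B‖ := by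
        rw [hfac]; exact Matrix.l2_opNorm_mul _ _
    _ ≤ ‖A‖ * ‖B‖ :=
        mul_le_mul (kron_one_le A) (one_kron_le B) (norm_nonneg _) (norm_nonneg _)

lemma kronecker_sub (A : Matrix m m ℂ) (B C : Matrix p p ℂ) :
    A ⊗ₖ (B - C) = A ⊗ₖ B - A ⊗ₖ C := by
  ext ⟨i, k⟩ ⟨j, l⟩
  simp [Matrix.kroneckerMap_apply, mul_sub]

end Stmt14Aux

open Stmt14Aux in
theorem stmt_14 (d g : ℕ) (A0 : Matrix (Fin d) (Fin d) ℂ)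
    (A : Fin g → Matrix (Fin d) (Fin d) ℂ) (hA : ∃ j, A j ≠ 0)
    (η : ℝ) (hη : 0 < η)
    (hcoer : ∀ (n : ℕ) (X : Fin g → Matrix (Fin n) (Fin n) ℂ), (∀ j, (X j).IsHermitian) →
      ((A0 ⊗ₖ (1 : Matrix (Fin n) (Fin n) ℂ) + ∑ j, A j ⊗ₖ X j)ᴴ *
          (A0 ⊗ₖ (1 : Matrix (Fin n) (Fin n) ℂ) + ∑ j, A j ⊗ₖ X j) -
        ((η ^ 2 : ℝ) : ℂ) • 1).PosSemidef) :
    ∀ (n : ℕ) (X : Fin g → Matrix (Fin n) (Fin n) ℂ),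
      (∀ j, ‖(2 * Complex.I)⁻¹ • (X j - (X j)ᴴ)‖ < η / 2 * (∑ j, ‖A j‖)⁻¹) →
      IsUnit (A0 ⊗ₖ (1 : Matrix (Fin n) (Fin n) ℂ) + ∑ j, A j ⊗ₖ X j) ∧
        ‖(A0 ⊗ₖ (1 : Matrix (Fin n) (Fin n) ℂ) + ∑ j, A j ⊗ₖ X j)⁻¹‖ ≤ 2 / η := by
  intro n X hX
  classical
  set S : ℝ := ∑ j, ‖A j‖ with hS
  have hS0 : 0 < S := by
    obtain ⟨j0, hj0⟩ := hA
    exact Finset.sum_pos' (fun j _ => norm_nonneg _)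
      ⟨j0, Finset.mem_univ _, norm_pos_iff.mpr hj0⟩
  set R : Fin g → Matrix (Fin n) (Fin n) ℂ := fun j => (2⁻¹ : ℂ) • (X j + (X j)ᴴ) with hR
  have hRherm : ∀ j, (R j).IsHermitian := by
    intro j
    show (R j)ᴴ = R j
    rw [hR]
    simp only [Matrix.conjTranspose_smul, Matrix.conjTranspose_add,
      Matrix.conjTranspose_conjTranspose]
    rw [add_comm]
    congr 1
    simp
  set LX : Matrix (Fin d × Fin n) (Fin d × Fin n) ℂ :=
    A0 ⊗ₖ (1 : Matrix (Fin n) (Fin n) ℂ) + ∑ j, A j ⊗ₖ X j with hLX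
  set L0 : Matrix (Fin d × Fin n) (Fin d × Fin n) ℂ :=
    A0 ⊗ₖ (1 : Matrix (Fin n) (Fin n) ℂ) + ∑ j, A j ⊗ₖ R j with hL0
  have hco := coercive_of_posSemidef L0 hη.le (hcoer n R hRherm)
  have hIm : ∀ j, X j - R j = Complex.I • ((2 * Complex.I)⁻¹ • (X j - (X j)ᴴ)) := by
    intro j
    rw [smul_smul]
    have hc : Complex.I * (2 * Complex.I)⁻¹ = (2⁻¹ : ℂ) := by
      field_simp
    rw [hc, hR]
    module
  have hdiff : LX - L0 = ∑ j, A j ⊗ₖ (X j - R j) := by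
    rw [hLX, hL0, add_sub_add_left_eq_sub, ← Finset.sum_sub_distrib]
    exact Finset.sum_congr rfl fun j _ => (kronecker_sub (A j) (X j) (R j)).symm
  have hEnorm : ‖LX - L0‖ ≤ η / 2 := by
    rw [hdiff]
    calc ‖∑ j, A j ⊗ₖ (X j - R j)‖ ≤ ∑ j, ‖A j ⊗ₖ (X j - R j)‖ := norm_sum_le _ _
      _ ≤ ∑ j, ‖A j‖ * (η / 2 * S⁻¹) := by
          refine Finset.sum_le_sum fun j _ => ?_
          refine le_trans (kron_le _ _) ?_
          refine mul_le_mul_of_nonneg_left ?_ (norm_nonneg _)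
          rw [hIm j, norm_smul, Complex.norm_I, one_mul]
          exact (hX j).le
      _ = S * (η / 2 * S⁻¹) := by rw [← Finset.sum_mul]
      _ = η / 2 := by field_simp
  have key : ∀ x : (Fin d × Fin n) → ℂ,
      η / 2 * ‖(WithLp.equiv 2 ((Fin d × Fin n) → ℂ)).symm x‖ ≤
        ‖(WithLp.equiv 2 ((Fin d × Fin n) → ℂ)).symm (LX *ᵥ x)‖ := by
    intro x
    have h1 := hco x
    have heq : (WithLp.equiv 2 ((Fin d × Fin n) → ℂ)).symm ((LX - L0) *ᵥ x) =
        (WithLp.equiv 2 ((Fin d × Fin n) → ℂ)).symm (LX *ᵥ x) -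
          (WithLp.equiv 2 ((Fin d × Fin n) → ℂ)).symm (L0 *ᵥ x) := by
      rw [Matrix.sub_mulVec]; rfl
    have h3 : ‖(WithLp.equiv 2 ((Fin d × Fin n) → ℂ)).symm (L0 *ᵥ x)‖ ≤
        ‖(WithLp.equiv 2 ((Fin d × Fin n) → ℂ)).symm (LX *ᵥ x)‖ +
          ‖(WithLp.equiv 2 ((Fin d × Fin n) → ℂ)).symm ((LX - L0) *ᵥ x)‖ := by
      rw [heq]
      calc ‖(WithLp.equiv 2 ((Fin d × Fin n) → ℂ)).symm (L0 *ᵥ x)‖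
          = ‖(WithLp.equiv 2 ((Fin d × Fin n) → ℂ)).symm (LX *ᵥ x) -
              ((WithLp.equiv 2 ((Fin d × Fin n) → ℂ)).symm (LX *ᵥ x) -
                (WithLp.equiv 2 ((Fin d × Fin n) → ℂ)).symm (L0 *ᵥ x))‖ := by
            rw [sub_sub_cancel]
        _ ≤ _ := norm_sub_le _ _
    have h4 : ‖(WithLp.equiv 2 ((Fin d × Fin n) → ℂ)).symm ((LX - L0) *ᵥ x)‖ ≤
        (η / 2) * ‖(WithLp.equiv 2 ((Fin d × Fin n) → ℂ)).symm x‖ :=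
      le_trans (mulVec_le _ _) (mul_le_mul_of_nonneg_right hEnorm (norm_nonneg _))
    linarith
  obtain ⟨hu, hb⟩ := isUnit_of_coercive LX (by positivity) key
  refine ⟨hu, ?_⟩
  rw [show (2 : ℝ) / η = (η / 2)⁻¹ by rw [inv_div]]
  exact hb
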